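/- Let a < b, let φ : [a,b] → [a,b] be an affine continuous map with φ(a) < φ(b), let g : [a,b] → [0,∞) be φ-convex and Lebesgue integrable, and let f : [a,b] → [0,∞) be Lebesgue integrable and (g,φ)-convex dominated on [a,b] (i.e. (g,φ_h)-convex dominated with h(t) = t). Then |(f(φ(a)) + f(φ(b)))/2 − (1/(φ(b) − φ(a))) ∫_{φ(a)}^{φ(b)} f(x) dx| ≤ (g(φ(a)) + g(φ(b)))/2 − (1/(φ(b) − φ(a))) ∫_{φ(a)}^{φ(b)} g(x) dx. -/

import Mathlib

open MeasureTheory Set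

/-- `F` is `φ_h`-convex on `I`. -/
def PhiHConvexOn (I : Set ℝ) (h φ F : ℝ → ℝ) : Prop :=
  ∀ x ∈ I, ∀ y ∈ I, ∀ t ∈ Set.Ioo (0:ℝ) 1,
    F (t * φ x + (1 - t) * φ y) ≤ h t * F (φ x) + h (1 - t) * F (φ y)

/-- `f` is `(g, φ_h)`-convex dominated on `I`. -/
def GPhiHConvexDominated (I : Set ℝ) (h φ g f : ℝ → ℝ) : Prop :=
  ∀ x ∈ I, ∀ y ∈ I, ∀ t ∈ Set.Ioo (0:ℝ) 1,
    |h t * f (φ x) + h (1 - t) * f (φ y) - f (t * φ x + (1 - t) * φ y)| ≤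
      h t * g (φ x) + h (1 - t) * g (φ y) - g (t * φ x + (1 - t) * φ y)

lemma aux_lin_integral (c d : ℝ) :
    (∫ t in (0:ℝ)..1, (t * c + (1 - t) * d)) = (c + d) / 2 := by
  have h : (fun t : ℝ => t * c + (1 - t) * d) = fun t : ℝ => t * (c - d) + d := by
    funext t; ring
  have h1 : IntervalIntegrable (fun t : ℝ => t * (c - d)) volume 0 1 :=
    (intervalIntegral.intervalIntegrable_id).mul_const _
  rw [h, intervalIntegral.integral_add h1 intervalIntegrable_const,
    intervalIntegral.integral_mul_const, integral_id, intervalIntegral.integral_const]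
  simp
  ring

theorem stmt5 (a b : ℝ) (hab : a < b) (φ f g : ℝ → ℝ)
    (hφmaps : Set.MapsTo φ (Set.Icc a b) (Set.Icc a b))
    (hφaff : ∀ x ∈ Set.Icc a b, ∀ y ∈ Set.Icc a b, ∀ l ∈ Set.Icc (0:ℝ) 1,
      φ (l * x + (1 - l) * y) = l * φ x + (1 - l) * φ y)
    (hφcont : ContinuousOn φ (Set.Icc a b))
    (hφab : φ a < φ b)
    (hg0 : ∀ x ∈ Set.Icc a b, 0 ≤ g x)
    (hgconv : PhiHConvexOn (Set.Icc a b) (fun t => t) φ g)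
    (hgint : IntegrableOn g (Set.Icc a b))
    (hf0 : ∀ x ∈ Set.Icc a b, 0 ≤ f x)
    (hfint : IntegrableOn f (Set.Icc a b))
    (hfdom : GPhiHConvexDominated (Set.Icc a b) (fun t => t) φ g f) :
    |(f (φ a) + f (φ b)) / 2 - (1 / (φ b - φ a)) * ∫ x in φ a..φ b, f x| ≤
      (g (φ a) + g (φ b)) / 2 - (1 / (φ b - φ a)) * ∫ x in φ a..φ b, g x := by
  set A := φ a with hA
  set B := φ b with hB
  have ha : a ∈ Set.Icc a b := ⟨le_refl a, hab.le⟩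
  have hb : b ∈ Set.Icc a b := ⟨hab.le, le_refl b⟩
  have hAmem : A ∈ Set.Icc a b := hφmaps ha
  have hBmem : B ∈ Set.Icc a b := hφmaps hb
  have hABlt : A < B := hφab
  have hABne : A - B ≠ 0 := by linarith
  -- interval integrability of f and g on [A, B]
  have hsub : Set.uIcc A B ⊆ Set.Icc a b := by
    rw [Set.uIcc_of_le hABlt.le]
    exact Set.Icc_subset_Icc hAmem.1 hBmem.2
  have hfAB : IntervalIntegrable f volume A B :=
    (hfint.mono_set hsub).intervalIntegrable
  have hgAB : IntervalIntegrable g volume A B :=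
    (hgint.mono_set hsub).intervalIntegrable
  -- integrability of the composed functions on [0,1]
  have hcomp : ∀ (F : ℝ → ℝ), IntervalIntegrable F volume A B →
      IntervalIntegrable (fun t => F ((A - B) * t + B)) volume 0 1 := by
    intro F hF
    have h1 : IntervalIntegrable (fun x => F (x + B)) volume (A - B) (B - B) :=
      hF.comp_add_right B
    have h2 : IntervalIntegrable (fun t => F ((A - B) * t + B)) volume
        ((A - B) / (A - B)) ((B - B) / (A - B)) := h1.comp_mul_left (c := A - B)
    rw [div_self hABne] at h2
    simpa using h2.symm
  have hcf := hcomp f hfAB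
  have hcg := hcomp g hgAB
  -- the two integrand functions
  set F : ℝ → ℝ := fun t => t * f A + (1 - t) * f B - f (t * A + (1 - t) * B) with hFdef
  set G : ℝ → ℝ := fun t => t * g A + (1 - t) * g B - g (t * A + (1 - t) * B) with hGdef
  have hrw : ∀ t : ℝ, t * A + (1 - t) * B = (A - B) * t + B := by intro t; ring
  have hlin : ∀ c d : ℝ, IntervalIntegrable (fun t : ℝ => t * c + (1 - t) * d) volume 0 1 :=
    fun c d => (Continuous.intervalIntegrable (by fun_prop) 0 1)
  have hFint : IntervalIntegrable F volume 0 1 := by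
    have : F = fun t => (t * f A + (1 - t) * f B) - f ((A - B) * t + B) := by
      funext t; simp [hFdef, hrw t]
    rw [this]
    exact (hlin (f A) (f B)).sub hcf
  have hGint : IntervalIntegrable G volume 0 1 := by
    have : G = fun t => (t * g A + (1 - t) * g B) - g ((A - B) * t + B) := by
      funext t; simp [hGdef, hrw t]
    rw [this]
    exact (hlin (g A) (g B)).sub hcg
  have habsFint : IntervalIntegrable (fun t => |F t|) volume 0 1 := hFint.abs
  -- pointwise bound a.e.
  have hptwise : ∀ t ∈ Set.Ioo (0:ℝ) 1, |F t| ≤ G t := by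
    intro t ht
    have := hfdom a ha b hb t ht
    simpa [hFdef, hGdef] using this
  have hae : (fun t => |F t|) ≤ᵐ[volume.restrict (Set.Icc (0:ℝ) 1)] G := by
    rw [← Measure.restrict_congr_set Ioo_ae_eq_Icc]
    exact ae_restrict_of_forall_mem measurableSet_Ioo hptwise
  -- value of the composed integral
  have hval : ∀ (F : ℝ → ℝ),
      (∫ t in (0:ℝ)..1, F ((A - B) * t + B)) = (1 / (B - A)) * ∫ x in A..B, F x := by
    intro F
    rw [intervalIntegral.integral_comp_mul_add F hABne B]
    have h1 : (A - B) * 0 + B = B := by ring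
    have h2 : (A - B) * 1 + B = A := by ring
    rw [h1, h2, intervalIntegral.integral_symm, smul_eq_mul,
      show A - B = -(B - A) by ring, inv_neg]
    ring
  have hintF : (∫ t in (0:ℝ)..1, F t) =
      (f A + f B) / 2 - (1 / (B - A)) * ∫ x in A..B, f x := by
    have : F = fun t => (t * f A + (1 - t) * f B) - f ((A - B) * t + B) := by
      funext t; simp [hFdef, hrw t]
    rw [this, intervalIntegral.integral_sub (hlin (f A) (f B)) hcf, hval f]
    rw [aux_lin_integral]
  have hintG : (∫ t in (0:ℝ)..1, G t) =
      (g A + g B) / 2 - (1 / (B - A)) * ∫ x in A..B, g x := by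
    have : G = fun t => (t * g A + (1 - t) * g B) - g ((A - B) * t + B) := by
      funext t; simp [hGdef, hrw t]
    rw [this, intervalIntegral.integral_sub (hlin (g A) (g B)) hcg, hval g]
    rw [aux_lin_integral]
  calc |(f A + f B) / 2 - (1 / (B - A)) * ∫ x in A..B, f x|
      = |∫ t in (0:ℝ)..1, F t| := by rw [hintF]
    _ ≤ ∫ t in (0:ℝ)..1, |F t| :=
        intervalIntegral.abs_integral_le_integral_abs zero_le_one
    _ ≤ ∫ t in (0:ℝ)..1, G t :=
        intervalIntegral.integral_mono_ae_restrict zero_le_one habsFint hGint hae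
    _ = (g A + g B) / 2 - (1 / (B - A)) * ∫ x in A..B, g x := hintG
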